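/- Let T > 0, K₀ > 0, λ ∈ ℝ, and let ψ, P : ℝ → ℝ be continuously differentiable T-periodic functions with P > 0 and (1/T)∫₀^T ψ = 1, satisfying for all t: P'(t) + (λ + K₀ψ(t))P(t) = 2K₀ψ(t-T)P(t-T)e^{-λT}. Then ((λ+K₀)/(2K₀))·e^{λT} = 1. -/

import Mathlib

theorem stmt_7 (T K₀ lam : ℝ) (hT : 0 < T) (hK : 0 < K₀)
    (ψ P P' : ℝ → ℝ)
    (hψ : Continuous ψ) (hψper : Function.Periodic ψ T)
    (hψavg : (1 / T) * ∫ t in (0 : ℝ)..T, ψ t = 1)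
    (hP : ∀ t, HasDerivAt P (P' t) t) (hP' : Continuous P')
    (hPper : Function.Periodic P T) (hPpos : ∀ t, 0 < P t)
    (hdde : ∀ t, P' t + (lam + K₀ * ψ t) * P t
      = 2 * K₀ * ψ (t - T) * P (t - T) * Real.exp (-lam * T)) :
    (lam + K₀) / (2 * K₀) * Real.exp (lam * T) = 1 := by
  set c : ℝ := 2 * K₀ * Real.exp (-lam * T) - K₀ with hc
  -- derivative of log ∘ P
  have hlog : ∀ t, HasDerivAt (fun x => Real.log (P x)) (-lam + c * ψ t) t := by
    intro t
    have h1 : HasDerivAt (fun x => Real.log (P x)) (P' t / P t) t :=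
      (hP t).log (ne_of_gt (hPpos t))
    have heq : P' t / P t = -lam + c * ψ t := by
      have hd := hdde t
      rw [hψper.sub_eq, hPper.sub_eq] at hd
      have hPne : P t ≠ 0 := ne_of_gt (hPpos t)
      rw [neg_mul] at hd
      field_simp [hc, neg_mul]
      rw [← neg_mul] at hd; linear_combination hd - P t * ψ t * hc
    rwa [heq] at h1
  have hint : IntervalIntegrable (fun t => -lam + c * ψ t) MeasureTheory.volume 0 T :=
    (Continuous.intervalIntegrable (by continuity) 0 T)
  have hFTC : ∫ t in (0:ℝ)..T, (-lam + c * ψ t)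
      = Real.log (P T) - Real.log (P 0) :=
    intervalIntegral.integral_eq_sub_of_hasDerivAt (fun t _ => hlog t) hint
  have hPT : P T = P 0 := by simpa using hPper 0
  have hψint : ∫ t in (0:ℝ)..T, ψ t = T := by
    have := hψavg
    field_simp at this
    linarith [this]
  have hsplit : ∫ t in (0:ℝ)..T, (-lam + c * ψ t) = -lam * T + c * T := by
    have h1 : IntervalIntegrable (fun _ : ℝ => -lam) MeasureTheory.volume 0 T :=
      intervalIntegrable_const
    have h2 : IntervalIntegrable (fun t => c * ψ t) MeasureTheory.volume 0 T :=
      (hψ.intervalIntegrable 0 T).const_mul c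
    rw [intervalIntegral.integral_add h1 h2, intervalIntegral.integral_const_mul, hψint,
      intervalIntegral.integral_const]
    simp [smul_eq_mul]; ring
  rw [hPT, sub_self, hsplit] at hFTC
  -- hFTC : -lam*T + c*T = 0, so lam = c, i.e. lam + K₀ = 2K₀ e^{-λT}
  have hlam : lam + K₀ = 2 * K₀ * Real.exp (-lam * T) := by
    have h0 : (c - lam) * T = 0 := by linear_combination hFTC
    have h1 : c - lam = 0 := by
      rcases mul_eq_zero.mp h0 with h | h
      · exact h
      · exact absurd h (ne_of_gt hT)
    have : c = lam := by linarith
    rw [hc] at this; linarith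
  have hexp : Real.exp (-lam * T) * Real.exp (lam * T) = 1 := by
    rw [← Real.exp_add]; ring_nf; exact Real.exp_zero
  have h2K : (2 * K₀) ≠ 0 := by positivity
  field_simp
  linear_combination Real.exp (lam * T) * hlam + 2 * K₀ * hexp
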